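/- (Corollary 7.2) Let M be a finite set of goods and let each of n agents i have a normalized monotone submodular valuation v_i : 2^M → ℝ and a cardinality constraint I_i = {S ⊆ M : |S| ≤ k_i}. Then there exists an allocation A = (A_1, …, A_n) of pairwise disjoint sets with |A_i| ≤ k_i for all i, such that: (1) for every pair of agents i, j with A_j ≠ ∅ there is some g ∈ A_j such that v_i(A_i) ≥ (1/2) · v_i(A'_j) for every A'_j ⊆ A_j \ {g} with |A'_j| ≤ k_i (and v_i(A_i) ≥ (1/2) · v_i(A'_j) for every A'_j ⊆ A_j with |A'_j| ≤ k_i when A_j = ∅); and (2) either A_1 ∪ … ∪ A_n = M or |A_i| = k_i for every agent i. -/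

import Mathlib

open Finset

/-- A set function on subsets of a finite ground set is submodular if the marginal value of any
item with respect to a smaller set is at least its marginal value with respect to a larger set. -/
def Submodular {α : Type*} [DecidableEq α] (f : Finset α → ℝ) : Prop :=
  ∀ ⦃S T : Finset α⦄, S ⊆ T → ∀ ⦃x : α⦄, x ∉ T →
    f (insert x T) - f T ≤ f (insert x S) - f S

section Aux

variable {α : Type*} [DecidableEq α]

private lemma vnonneg (f : Finset α → ℝ) (h0 : f ∅ = 0)
    (hm : ∀ ⦃S T : Finset α⦄, S ⊆ T → f S ≤ f T) (S : Finset α) : 0 ≤ f S := by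
  rw [← h0]; exact hm (Finset.empty_subset S)

private lemma sum_marg (f : Finset α → ℝ)
    (hm : ∀ ⦃S T : Finset α⦄, S ⊆ T → f S ≤ f T) (hs : Submodular f)
    (A B : Finset α) : f (A ∪ B) ≤ f A + ∑ b ∈ B, (f (insert b A) - f A) := by
  induction B using Finset.induction_on with
  | empty => simp
  | @insert a s ha ih =>
    rw [Finset.union_insert, Finset.sum_insert ha]
    by_cases h : a ∈ A ∪ s
    · rw [Finset.insert_eq_self.mpr h]
      have h2 : 0 ≤ f (insert a A) - f A := sub_nonneg.mpr (hm (Finset.subset_insert a A))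
      linarith
    · have h2 := hs Finset.subset_union_left h
      linarith

private lemma take_toFinset_subset (l : List α) (m : ℕ) :
    (l.take m).toFinset ⊆ l.toFinset := by
  intro a ha
  rw [List.mem_toFinset] at ha ⊢
  exact List.take_subset m l ha

private lemma take_toFinset_subset_append (l : List α) (g : α) (m : ℕ) :
    (l.take m).toFinset ⊆ ((l ++ [g]).take m).toFinset := by
  intro a ha
  rw [List.mem_toFinset] at ha ⊢
  rw [List.take_append]
  exact List.mem_append_left _ ha

/-- The invariant maintained by the greedy round-robin algorithm. -/
structure GS {n : ℕ} (v : Fin n → Finset α → ℝ) (k : Fin n → ℕ)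
    (p : Fin n → List α) (U : Finset α) : Prop where
  nodup : ∀ i, (p i).Nodup
  disj : ∀ i j, i ≠ j → ∀ a ∈ p i, a ∉ p j
  notU : ∀ i, ∀ a ∈ p i, a ∉ U
  lenle : ∀ i, (p i).length ≤ k i
  compl : ∀ a : α, a ∉ U → ∃ i, a ∈ p i
  greedy : ∀ i, ∀ m, m < (p i).length → ∀ b ∈ U,
      v i (insert b ((p i).take m).toFinset) ≤ v i (((p i).take (m+1)).toFinset)
  main : ∀ i j, i ≠ j → ∀ g, (p j).head? = some g →
      ∀ B ⊆ ((p j).toFinset).erase g, B.card ≤ k i →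
      ∑ b ∈ B, (v i (insert b (p i).toFinset) - v i ((p i).toFinset))
        ≤ v i (((p i).take B.card).toFinset)

private lemma pick_step {n : ℕ} (v : Fin n → Finset α → ℝ) (k : Fin n → ℕ)
    (hnorm : ∀ i, v i ∅ = 0)
    (hmono : ∀ i, ∀ ⦃S T : Finset α⦄, S ⊆ T → v i S ≤ v i T)
    (hsub : ∀ i, Submodular (v i))
    (p : Fin n → List α) (U : Finset α) (hS : GS v k p U)
    (x : Fin n) (hU : U.Nonempty) (hx : (p x).length < k x)
    (hbal : ∀ i, min (k i) ((p x).length) ≤ (p i).length) :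
    ∃ g ∈ U, GS v k (Function.update p x (p x ++ [g])) (U.erase g) := by
  obtain ⟨g, hgU, hmax⟩ := U.exists_max_image (fun b => v x (insert b (p x).toFinset)) hU
  refine ⟨g, hgU, ?_⟩
  set p' := Function.update p x (p x ++ [g]) with hp'
  have hpx : p' x = p x ++ [g] := Function.update_self x _ p
  have hpi : ∀ i, i ≠ x → p' i = p i := fun i hi => Function.update_of_ne hi _ p
  have hgnot : ∀ i, g ∉ p i := fun i h => hS.notU i g h hgU
  have happ : (p x ++ [g]).toFinset = insert g (p x).toFinset := by
    ext a; simp [List.toFinset_append, or_comm]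
  have hmem : ∀ i a, a ∈ p' i ↔ (a ∈ p i ∨ (i = x ∧ a = g)) := by
    intro i a
    by_cases hi : i = x
    · subst hi; rw [hpx, List.mem_append, List.mem_singleton]; tauto
    · rw [hpi i hi]; simp [hi]
  refine ⟨?_, ?_, ?_, ?_, ?_, ?_, ?_⟩
  · -- nodup
    intro i
    by_cases hi : i = x
    · subst hi
      rw [hpx, List.nodup_append]
      refine ⟨hS.nodup i, List.nodup_singleton g, fun a ha b hb => ?_⟩
      rw [List.mem_singleton] at hb
      rintro rfl; exact hgnot i (hb ▸ ha)
    · rw [hpi i hi]; exact hS.nodup i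
  · -- disj
    intro i j hij a ha hb
    rw [hmem] at ha hb
    rcases ha with ha | ⟨hix, hag⟩
    · rcases hb with hb | ⟨hjx, hbg⟩
      · exact hS.disj i j hij a ha hb
      · exact hgnot i (hbg ▸ ha)
    · rcases hb with hb | ⟨hjx, hbg⟩
      · exact hgnot j (hag ▸ hb)
      · exact hij (hix.trans hjx.symm)
  · -- notU
    intro i a ha haU
    rw [hmem] at ha
    rcases ha with ha | ⟨_, hag⟩
    · exact hS.notU i a ha (Finset.mem_of_mem_erase haU)
    · exact (Finset.notMem_erase g U) (hag ▸ haU)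
  · -- lenle
    intro i
    by_cases hi : i = x
    · subst hi
      rw [hpx, List.length_append, List.length_singleton]
      omega
    · rw [hpi i hi]; exact hS.lenle i
  · -- compl
    intro a ha
    by_cases hag : a = g
    · exact ⟨x, by rw [hpx, hag]; exact List.mem_append_right _ (List.mem_singleton_self g)⟩
    · have haU : a ∉ U := fun h => ha (Finset.mem_erase.mpr ⟨hag, h⟩)
      obtain ⟨i, hi⟩ := hS.compl a haU
      exact ⟨i, (hmem i a).mpr (Or.inl hi)⟩
  · -- greedy
    intro i m hm b hb
    have hbU : b ∈ U := Finset.mem_of_mem_erase hb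
    by_cases hi : i = x
    · subst hi
      rw [hpx] at hm ⊢
      rw [List.length_append, List.length_singleton] at hm
      rcases Nat.lt_or_ge m (p i).length with hlt | hge
      · rw [List.take_append_of_le_length (le_of_lt hlt),
            List.take_append_of_le_length hlt]
        exact hS.greedy i m hlt b hbU
      · have hmeq : m = (p i).length := by omega
        subst hmeq
        have hfull : ((p i ++ [g]).take ((p i).length + 1)) = p i ++ [g] := by
          have hl : (p i ++ [g]).length = (p i).length + 1 := by
            rw [List.length_append, List.length_singleton]
          rw [← hl, List.take_length]
        rw [List.take_append_of_le_length le_rfl, List.take_length, hfull, happ]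
        exact hmax b hbU
    · rw [hpi i hi]
      exact hS.greedy i m (by rwa [hpi i hi] at hm) b hbU
  · -- main
    intro i j hij g' hg' B hB hcard
    by_cases hj : j = x
    · subst hj
      rw [hpi i hij]
      rw [hpx] at hg' hB
      by_cases hpxe : p j = []
      · rw [hpxe] at hg' hB
        simp only [List.nil_append, List.head?_cons, Option.some.injEq] at hg'
        subst hg'
        have hBe : B = ∅ := Finset.subset_empty.mp (by simpa using hB)
        subst hBe
        simp [hnorm i]
      · obtain ⟨a0, l0, hal⟩ := List.exists_cons_of_ne_nil hpxe
        have hg'2 : (p j).head? = some g' := by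
          rw [hal] at hg' ⊢
          simpa using hg'
        have hg'px : g' ∈ p j := by
          rw [hal]
          rw [hal] at hg'2
          simp only [List.head?_cons, Option.some.injEq] at hg'2
          rw [← hg'2]
          exact List.mem_cons_self
        have hg'mem : g' ∈ (p j).toFinset := List.mem_toFinset.mpr hg'px
        rw [happ] at hB
        by_cases hgB : g ∈ B
        · have hBg : B.erase g ⊆ ((p j).toFinset).erase g' := by
            intro b hb
            rw [Finset.mem_erase] at hb
            have h2 := hB hb.2
            rw [Finset.mem_erase, Finset.mem_insert] at h2
            rw [Finset.mem_erase]
            exact ⟨h2.1, h2.2.resolve_left hb.1⟩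
          have h0 : 0 < B.card := Finset.card_pos.mpr ⟨g, hgB⟩
          have hcarde : B.card = (B.erase g).card + 1 := by
            rw [Finset.card_erase_of_mem hgB]; omega
          have hmain := hS.main i j hij g' hg'2 (B.erase g) hBg (by omega)
          have hmlenx : (B.erase g).card + 1 ≤ (p j).length := by
            have h1 : (B.erase g).card ≤ ((p j).toFinset.erase g').card :=
              Finset.card_le_card hBg
            have h2 : ((p j).toFinset.erase g').card = (p j).toFinset.card - 1 :=
              Finset.card_erase_of_mem hg'mem
            have h3 : (p j).toFinset.card ≤ (p j).length := List.toFinset_card_le _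
            have h4 : 0 < (p j).toFinset.card := Finset.card_pos.mpr ⟨g', hg'mem⟩
            omega
          have hileni : (B.erase g).card + 1 ≤ (p i).length := by
            have h5 := hbal i
            omega
          have hginsi : g ∉ (p i).toFinset := by
            rw [List.mem_toFinset]; exact hgnot i
          have hsubm := hsub i (take_toFinset_subset (p i) (B.erase g).card) hginsi
          have hgr := hS.greedy i (B.erase g).card (by omega) g hgU
          rw [← Finset.sum_erase_add B _ hgB, hcarde]
          linarith
        · have hB2 : B ⊆ ((p j).toFinset).erase g' := by
            intro b hb
            have h2 := hB hb
            rw [Finset.mem_erase, Finset.mem_insert] at h2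
            rw [Finset.mem_erase]
            refine ⟨h2.1, h2.2.resolve_left ?_⟩
            intro h; exact hgB (h ▸ hb)
          exact hS.main i j hij g' hg'2 B hB2 hcard
    · rw [hpi j hj] at hg' hB
      by_cases hi : i = x
      · subst hi
        rw [hpx]
        have key := hS.main i j hij g' hg' B hB hcard
        have hterm : ∀ b ∈ B,
            v i (insert b ((p i ++ [g]).toFinset)) - v i ((p i ++ [g]).toFinset)
              ≤ v i (insert b (p i).toFinset) - v i ((p i).toFinset) := by
          intro b hb
          have hbj : b ∈ p j := List.mem_toFinset.mp (Finset.mem_of_mem_erase (hB hb))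
          have hbnotx : b ∉ (p i ++ [g]).toFinset := by
            rw [happ, Finset.mem_insert, List.mem_toFinset]
            rintro (rfl | h)
            · exact hgnot j hbj
            · exact hS.disj j i hj b hbj h
          have hsubset : (p i).toFinset ⊆ (p i ++ [g]).toFinset := by
            rw [happ]; exact Finset.subset_insert _ _
          exact hsub i hsubset hbnotx
        have hsum := Finset.sum_le_sum hterm
        have hrhs : v i (((p i).take B.card).toFinset)
            ≤ v i (((p i ++ [g]).take B.card).toFinset) :=
          hmono i (take_toFinset_subset_append (p i) g B.card)
        linarith
      · rw [hpi i hi]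
        exact hS.main i j hij g' hg' B hB hcard

private lemma round_step {n : ℕ} (v : Fin n → Finset α → ℝ) (k : Fin n → ℕ)
    (hnorm : ∀ i, v i ∅ = 0)
    (hmono : ∀ i, ∀ ⦃S T : Finset α⦄, S ⊆ T → v i S ≤ v i T)
    (hsub : ∀ i, Submodular (v i))
    (r : ℕ) (p : Fin n → List α) (U : Finset α) (hS : GS v k p U)
    (hI : U.Nonempty → ∀ i, (p i).length = min (k i) r) :
    ∃ p' U', GS v k p' U' ∧ (U'.Nonempty → ∀ i, (p' i).length = min (k i) (r+1)) := by
  suffices h : ∀ x : ℕ, x ≤ n → ∃ p' U', GS v k p' U' ∧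
      (U'.Nonempty → ∀ i : Fin n,
        ((i : ℕ) < x → (p' i).length = min (k i) (r+1)) ∧
        (x ≤ (i : ℕ) → (p' i).length = min (k i) r)) by
    obtain ⟨p', U', h1, h2⟩ := h n le_rfl
    exact ⟨p', U', h1, fun hne i => (h2 hne i).1 i.isLt⟩
  intro x
  induction x with
  | zero =>
    exact fun _ => ⟨p, U, hS, fun hne i =>
      ⟨fun h => absurd h (Nat.not_lt_zero _), fun _ => hI hne i⟩⟩
  | succ x ih =>
    intro hx
    obtain ⟨p', U', h1, h2⟩ := ih (by omega)
    have hxn : x < n := hx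
    set X : Fin n := ⟨x, hxn⟩ with hXdef
    by_cases hc : U'.Nonempty ∧ (p' X).length < k X
    · have hlenX : (p' X).length = min (k X) r := (h2 hc.1 X).2 le_rfl
      have hbal : ∀ i, min (k i) ((p' X).length) ≤ (p' i).length := by
        intro i
        rcases Nat.lt_or_ge (i : ℕ) x with h | h
        · have hli := (h2 hc.1 i).1 h
          rw [hli, hlenX]; omega
        · have hli := (h2 hc.1 i).2 h
          rw [hli, hlenX]; omega
      obtain ⟨g, hg, h3⟩ := pick_step v k hnorm hmono hsub p' U' h1 X hc.1 hc.2 hbal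
      refine ⟨_, _, h3, ?_⟩
      intro hne i
      have hne' : U'.Nonempty := by
        obtain ⟨a, ha⟩ := hne; exact ⟨a, Finset.mem_of_mem_erase ha⟩
      constructor
      · intro hi
        by_cases hiX : i = X
        · subst hiX
          rw [Function.update_self, List.length_append, List.length_singleton]
          have h5 := hc.2
          rw [hlenX] at h5
          rw [hlenX]
          omega
        · have hiX' : (i : ℕ) ≠ x := fun h => hiX (Fin.ext h)
          rw [Function.update_of_ne hiX]
          exact (h2 hne' i).1 (by omega)
      · intro hi
        have hiX : i ≠ X := by
          intro h
          rw [h] at hi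
          simp only [hXdef] at hi
          omega
        rw [Function.update_of_ne hiX]
        exact (h2 hne' i).2 (by omega)
    · refine ⟨p', U', h1, ?_⟩
      intro hne i
      constructor
      · intro hi
        by_cases hiX : (i : ℕ) = x
        · have hieq : i = X := Fin.ext hiX
          have h' : ¬ ((p' X).length < k X) := fun hlt => hc ⟨hne, hlt⟩
          have hl := (h2 hne i).2 (by omega)
          have hle := h1.lenle i
          rw [hieq] at hl hle ⊢
          omega
        · exact (h2 hne i).1 (by omega)
      · intro hi
        exact (h2 hne i).2 (by omega)

private lemma main_exists {n : ℕ} [Fintype α] (v : Fin n → Finset α → ℝ) (k : Fin n → ℕ)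
    (hnorm : ∀ i, v i ∅ = 0)
    (hmono : ∀ i, ∀ ⦃S T : Finset α⦄, S ⊆ T → v i S ≤ v i T)
    (hsub : ∀ i, Submodular (v i)) :
    ∃ p U, GS v k p U ∧
      (U.Nonempty → ∀ i, (p i).length = min (k i) (Fintype.card α)) := by
  suffices h : ∀ r : ℕ, ∃ p U, GS v k p U ∧
      (U.Nonempty → ∀ i, (p i).length = min (k i) r) from h _
  intro r
  induction r with
  | zero =>
    refine ⟨fun _ => [], Finset.univ, ⟨?_, ?_, ?_, ?_, ?_, ?_, ?_⟩, ?_⟩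
    · intro i; exact List.nodup_nil
    · intro i j _ a ha; exact absurd ha List.not_mem_nil
    · intro i a ha _; exact List.not_mem_nil ha
    · intro i; exact Nat.zero_le _
    · intro a ha; exact absurd (Finset.mem_univ a) ha
    · intro i m hm; simp at hm
    · intro i j hij g hg; exact absurd hg (by simp)
    · intro _ i; simp
  | succ r ih =>
    obtain ⟨p, U, h1, h2⟩ := ih
    exact round_step v k hnorm hmono hsub r p U h1 h2

end Aux

/-- Corollary 7.2: for `n` agents with normalized monotone submodular valuations `v i` and
cardinality constraints `|S| ≤ k i` over a finite set of goods, there exists an allocation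
`A 0, …, A (n−1)` of pairwise disjoint sets with `|A i| ≤ k i` such that (1) for every pair of
agents `i, j`: if `A j` is nonempty there is some `g ∈ A j` with `v i (A i) ≥ (1/2) · v i B` for
every `B ⊆ A j \ {g}` with `|B| ≤ k i`, and if `A j = ∅` then `v i (A i) ≥ (1/2) · v i B` for
every `B ⊆ A j` with `|B| ≤ k i`; and (2) either all goods are allocated or every agent's
cardinality constraint is met with equality. -/
theorem stmt_19 {α : Type*} [DecidableEq α] [Fintype α] (n : ℕ)
    (v : Fin n → Finset α → ℝ) (k : Fin n → ℕ)
    (hnorm : ∀ i, v i ∅ = 0)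
    (hmono : ∀ i, ∀ ⦃S T : Finset α⦄, S ⊆ T → v i S ≤ v i T)
    (hsub : ∀ i, Submodular (v i)) :
    ∃ A : Fin n → Finset α,
      (∀ i j, i ≠ j → Disjoint (A i) (A j)) ∧
      (∀ i, (A i).card ≤ k i) ∧
      (∀ i j : Fin n,
        ((A j).Nonempty → ∃ g ∈ A j, ∀ B ⊆ (A j).erase g, B.card ≤ k i →
          (1 / 2 : ℝ) * v i B ≤ v i (A i)) ∧
        (A j = ∅ → ∀ B ⊆ A j, B.card ≤ k i → (1 / 2 : ℝ) * v i B ≤ v i (A i))) ∧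
      (Finset.univ.biUnion A = (Finset.univ : Finset α) ∨ ∀ i, (A i).card = k i) := by
  obtain ⟨p, U, hS, hI5⟩ := main_exists v k hnorm hmono hsub
  refine ⟨fun i => (p i).toFinset, ?_, ?_, ?_, ?_⟩
  · intro i j hij
    rw [Finset.disjoint_left]
    intro a ha hb
    exact hS.disj i j hij a (List.mem_toFinset.mp ha) (List.mem_toFinset.mp hb)
  · intro i
    exact le_trans (List.toFinset_card_le _) (hS.lenle i)
  · intro i j
    constructor
    · intro hne
      have hnil : p j ≠ [] := (List.toFinset_nonempty_iff _).mp hne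
      refine ⟨(p j).head hnil, List.mem_toFinset.mpr (List.head_mem hnil), ?_⟩
      intro B hB hcard
      have hnn : 0 ≤ v i B := vnonneg _ (hnorm i) (hmono i) B
      by_cases hij : i = j
      · subst hij
        have h1 : v i B ≤ v i ((p i).toFinset) :=
          hmono i (hB.trans (Finset.erase_subset _ _))
        linarith
      · have hmain := hS.main i j hij _ (List.head?_eq_head hnil) B hB hcard
        have h1 : v i (((p i).take B.card).toFinset) ≤ v i ((p i).toFinset) :=
          hmono i (take_toFinset_subset _ _)
        have h2 := sum_marg (v i) (hmono i) (hsub i) (p i).toFinset B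
        have h3 : v i B ≤ v i ((p i).toFinset ∪ B) := hmono i Finset.subset_union_right
        linarith
    · intro hempty B hB hcard
      rw [hempty, Finset.subset_empty] at hB
      subst hB
      rw [hnorm i]
      have := vnonneg _ (hnorm i) (hmono i) (p i).toFinset
      linarith
  · by_cases hU : U = ∅
    · left
      rw [Finset.eq_univ_iff_forall]
      intro a
      obtain ⟨i, hi⟩ := hS.compl a (by rw [hU]; exact Finset.notMem_empty a)
      exact Finset.mem_biUnion.mpr ⟨i, Finset.mem_univ i, List.mem_toFinset.mpr hi⟩
    · right
      have hne : U.Nonempty := Finset.nonempty_iff_ne_empty.mpr hU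
      intro i
      have hlen := hI5 hne i
      have hcard : (p i).toFinset.card = (p i).length :=
        List.toFinset_card_of_nodup (hS.nodup i)
      rcases le_or_gt (k i) (Fintype.card α) with h | h
      · rw [hcard, hlen]; omega
      · exfalso
        have hcc : (p i).toFinset.card = Fintype.card α := by rw [hcard, hlen]; omega
        have huniv : (p i).toFinset = Finset.univ := Finset.eq_univ_of_card _ hcc
        obtain ⟨u, hu⟩ := hne
        exact hS.notU i u (List.mem_toFinset.mp (huniv ▸ Finset.mem_univ u)) hu
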